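/- Let n ≥ 3 and let C_n be the cycle graph on n vertices (vertex set ℤ/nℤ, with i adjacent to i+1 and i−1). Then for every pair of vertices v, w of C_n with δ(v,w) ≥ 2, the number of vertices u with |δ(u,v) − δ(u,w)| ≥ 2 is at least n − 4. -/

import Mathlib

/-- The cycle graph on `ZMod n`: `i` is adjacent to `i + 1` and `i - 1`. -/
def cycleGraphZMod (n : ℕ) : SimpleGraph (ZMod n) :=
  SimpleGraph.fromRel (fun i j => j = i + 1)

section
variable {n : ℕ} (hn : 3 ≤ n)
include hn

lemma adj_succ (a : ZMod n) : (cycleGraphZMod n).Adj a (a + 1) := by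
  haveI : Fact (1 < n) := ⟨by omega⟩
  refine ⟨?_, Or.inl rfl⟩
  intro h
  exact (one_ne_zero (α := ZMod n)) (by linear_combination -h)

lemma walk_exists (a : ZMod n) :
    ∀ m : ℕ, ∃ p : (cycleGraphZMod n).Walk a (a + m), p.length = m := by
  intro m
  induction m with
  | zero => exact ⟨SimpleGraph.Walk.nil.copy rfl (by push_cast; ring), by simp⟩
  | succ m ih =>
      obtain ⟨p, hp⟩ := ih
      exact ⟨(p.concat (adj_succ hn (a + m))).copy rfl (by push_cast; ring),
        by simp [SimpleGraph.Walk.length_concat, hp]⟩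

lemma dist_le_val (a b : ZMod n) : (cycleGraphZMod n).dist a b ≤ (b - a).val := by
  have : NeZero n := ⟨by omega⟩
  obtain ⟨p, hp⟩ := walk_exists hn a (b - a).val
  have hb : a + ((b - a).val : ZMod n) = b := by
    rw [ZMod.natCast_val, ZMod.cast_id]; ring
  have := SimpleGraph.dist_le (p.copy rfl hb)
  rwa [SimpleGraph.Walk.length_copy, hp] at this

omit hn in
lemma walk_bound (a b : ZMod n) (p : (cycleGraphZMod n).Walk a b) :
    ∃ z : ℤ, (z : ZMod n) = b - a ∧ z.natAbs ≤ p.length := by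
  induction p with
  | nil => exact ⟨0, by simp, by simp⟩
  | @cons a c b h p ih =>
      obtain ⟨z, hz, hlen⟩ := ih
      obtain ⟨hne, h1 | h1⟩ := h
      · refine ⟨z + 1, ?_, ?_⟩
        · push_cast [hz, h1]; ring
        · simpa using (Int.natAbs_add_le z 1).trans (by show _ ≤ p.length + 1; omega)
      · refine ⟨z - 1, ?_, ?_⟩
        · push_cast [hz, h1]; ring
        · simpa using (Int.natAbs_sub_le z 1).trans (by show _ ≤ p.length + 1; omega)

lemma dist_eq (a b : ZMod n) :
    (cycleGraphZMod n).dist a b = min (b - a).val (a - b).val := by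
  have : NeZero n := ⟨by omega⟩
  have hub : (cycleGraphZMod n).dist a b ≤ min (b - a).val (a - b).val := by
    refine le_min (dist_le_val hn a b) ?_
    have := dist_le_val hn b a
    rwa [SimpleGraph.dist_comm] at this
  refine le_antisymm hub ?_
  have hreach : (cycleGraphZMod n).Reachable a b := by
    obtain ⟨p, -⟩ := walk_exists hn a (b - a).val
    have hb : a + ((b - a).val : ZMod n) = b := by
      rw [ZMod.natCast_val, ZMod.cast_id]; ring
    exact (p.copy rfl hb).reachable
  obtain ⟨p, hp⟩ := hreach.exists_walk_length_eq_dist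
  obtain ⟨z, hz, hlen⟩ := walk_bound a b p
  rw [hp] at hlen
  have hk : (b - a).val < n := ZMod.val_lt _
  have h2 : (((b - a).val : ℤ) : ZMod n) = b - a := by
    push_cast
    rw [ZMod.natCast_val, ZMod.cast_id]
  have hdvd : (n : ℤ) ∣ z - ((b - a).val : ℤ) :=
    (ZMod.intCast_zmod_eq_zero_iff_dvd _ _).mp (by push_cast [hz, h2]; ring)
  obtain ⟨t, ht⟩ := hdvd
  have hval : (a - b).val = if b - a = 0 then 0 else n - (b - a).val := by
    rw [show a - b = -(b - a) by ring, ZMod.neg_val]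
  by_cases hab : b - a = 0
  · have hba : b = a := by linear_combination hab
    simp [hba]
  · rw [hval, if_neg hab]
    have hk0 : (b - a).val ≠ 0 := fun h => hab (by rwa [ZMod.val_eq_zero] at h)
    rcases le_or_gt 0 t with hT | hT
    · have h3 : (0:ℤ) ≤ (n:ℤ) * t := mul_nonneg (by positivity) hT
      omega
    · have h3 : (n:ℤ) * t ≤ (n:ℤ) * (-1) :=
        mul_le_mul_of_nonneg_left (by omega) (by positivity)
      omega
end

section
lemma triple_even_card (a b c : ℕ) (h1 : b = a + 1) (h2 : c = a + 2) :
    (({a, b, c} : Finset ℕ).filter (fun x => x % 2 = 0)).card ≤ 2 := by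
  subst h1 h2
  rcases Nat.mod_two_eq_zero_or_one a with h | h
  · have hsub : (({a, a+1, a+2} : Finset ℕ).filter (fun x => x % 2 = 0)) ⊆ {a, a+2} := by
      intro x hx
      simp only [Finset.mem_filter, Finset.mem_insert, Finset.mem_singleton] at hx ⊢
      omega
    calc _ ≤ ({a, a+2} : Finset ℕ).card := Finset.card_le_card hsub
      _ ≤ _ := (Finset.card_insert_le _ _).trans (by simp)
  · have hsub : (({a, a+1, a+2} : Finset ℕ).filter (fun x => x % 2 = 0)) ⊆ {a+1} := by
      intro x hx
      simp only [Finset.mem_filter, Finset.mem_insert, Finset.mem_singleton] at hx ⊢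
      omega
    calc _ ≤ ({a+1} : Finset ℕ).card := Finset.card_le_card hsub
      _ ≤ _ := by simp

lemma F_card_le (n k : ℕ) (hk : 2 ≤ k) (hkn : k + 2 ≤ n) :
    ((Finset.range n).filter (fun x => 2*x = k-1 ∨ 2*x = k ∨ 2*x = k+1 ∨
      2*x = n+k-1 ∨ 2*x = n+k ∨ 2*x = n+k+1)).card ≤ 4 := by
  set F := (Finset.range n).filter (fun x => 2*x = k-1 ∨ 2*x = k ∨ 2*x = k+1 ∨
      2*x = n+k-1 ∨ 2*x = n+k ∨ 2*x = n+k+1) with hF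
  have hinj : Function.Injective (fun x : ℕ => 2 * x) := fun a b h => by dsimp at h; omega
  rw [← Finset.card_image_of_injective F hinj]
  have hsub : F.image (fun x : ℕ => 2 * x) ⊆
      (({k-1, k, k+1} : Finset ℕ).filter (fun x => x % 2 = 0)) ∪
      (({n+k-1, n+k, n+k+1} : Finset ℕ).filter (fun x => x % 2 = 0)) := by
    intro c hc
    simp only [Finset.mem_image, hF, Finset.mem_filter, Finset.mem_range,
      Finset.mem_union, Finset.mem_insert, Finset.mem_singleton] at hc ⊢
    obtain ⟨x, ⟨-, hx⟩, rfl⟩ := hc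
    omega
  calc _ ≤ _ := Finset.card_le_card hsub
    _ ≤ _ + _ := Finset.card_union_le _ _
    _ ≤ 4 := by
        have h1 := triple_even_card (k-1) k (k+1) (by omega) (by omega)
        have h2 := triple_even_card (n+k-1) (n+k) (n+k+1) (by omega) (by omega)
        omega
end

lemma arith_key (n k x y vu wu d1 d2 : ℕ) (hn : 3 ≤ n) (hk2 : 2 ≤ k) (hkn : k+2 ≤ n)
    (hxlt : x < n) (hylt : y < n)
    (hvu : vu = 0 ∧ x = 0 ∨ vu = n - x ∧ x ≠ 0)
    (hwu : wu = 0 ∧ y = 0 ∨ wu = n - y ∧ y ≠ 0)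
    (hy2 : y = x + (n-k) ∨ y + n = x + (n-k))
    (hd1a : d1 = vu ∨ d1 = x) (hd1b : d1 ≤ vu) (hd1c : d1 ≤ x)
    (hd2a : d2 = wu ∨ d2 = y) (hd2b : d2 ≤ wu) (hd2c : d2 ≤ y)
    (habs1 : -2 < (d1:ℤ) - d2) (habs2 : (d1:ℤ) - d2 < 2) :
    2*x = k-1 ∨ 2*x = k ∨ 2*x = k+1 ∨ 2*x = n+k-1 ∨ 2*x = n+k ∨ 2*x = n+k+1 := by
  rcases hvu with ⟨h1,h1'⟩|⟨h1,h1'⟩ <;> rcases hwu with ⟨h2,h2'⟩|⟨h2,h2'⟩ <;>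
    rcases hy2 with h3|h3 <;> rcases hd1a with h4|h4 <;> rcases hd2a with h5|h5 <;>
    omega

/-- In the cycle `C_n` (`n ≥ 3`), any pair of vertices at distance at least 2 is
distinguished by at least `n − 4` vertices. -/
theorem stmt_6 (n : ℕ) (hn : 3 ≤ n) (v w : ZMod n)
    (hvw : 2 ≤ (cycleGraphZMod n).dist v w) :
    (n : ℤ) - 4 ≤
      ({u : ZMod n |
        2 ≤ |((cycleGraphZMod n).dist u v : ℤ) - ((cycleGraphZMod n).dist u w : ℤ)|}.ncard : ℤ) := by
  haveI : NeZero n := ⟨by omega⟩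
  set k := (w - v).val with hk
  rw [dist_eq hn v w] at hvw
  have hk2 : 2 ≤ k := le_trans hvw (min_le_left _ _)
  have hwv0 : w - v ≠ 0 := by
    intro h
    rw [hk, h, ZMod.val_zero] at hk2 -- k is set; careful
    omega
  have hvwval : (v - w).val = n - k := by
    rw [show v - w = -(w - v) by ring, ZMod.neg_val, if_neg hwv0]
  have hkn : k + 2 ≤ n := by
    have h1 := le_trans hvw (min_le_right _ _)
    have h2 : k < n := ZMod.val_lt _
    omega
  set S := {u : ZMod n |
      2 ≤ |((cycleGraphZMod n).dist u v : ℤ) - ((cycleGraphZMod n).dist u w : ℤ)|} with hS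
  set F := (Finset.range n).filter (fun x => 2*x = k-1 ∨ 2*x = k ∨ 2*x = k+1 ∨
      2*x = n+k-1 ∨ 2*x = n+k ∨ 2*x = n+k+1) with hF
  have key : ∀ u : ZMod n, u ∈ Sᶜ → (u - v).val ∈ F := by
    intro u hu
    simp only [hS, Set.mem_compl_iff, Set.mem_setOf_eq, not_le] at hu
    rw [dist_eq hn u v, dist_eq hn u w] at hu
    set x := (u - v).val with hx
    have hxlt : x < n := ZMod.val_lt _
    have hvu : (v - u).val = 0 ∧ x = 0 ∨ (v - u).val = n - x ∧ x ≠ 0 := by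
      rcases eq_or_ne (u - v) 0 with h | h
      · left
        constructor
        · rw [show v - u = -(u - v) by ring, h, neg_zero, ZMod.val_zero]
        · rw [hx, h, ZMod.val_zero]
      · right
        refine ⟨by rw [show v - u = -(u - v) by ring, ZMod.neg_val, if_neg h], ?_⟩
        intro h0
        exact h (by rwa [← ZMod.val_eq_zero, ← hx])
    set y := (u - w).val with hy
    have hwu : (w - u).val = 0 ∧ y = 0 ∨ (w - u).val = n - y ∧ y ≠ 0 := by
      rcases eq_or_ne (u - w) 0 with h | h
      · left
        constructor
        · rw [show w - u = -(u - w) by ring, h, neg_zero, ZMod.val_zero]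
        · rw [hy, h, ZMod.val_zero]
      · right
        refine ⟨by rw [show w - u = -(u - w) by ring, ZMod.neg_val, if_neg h], ?_⟩
        intro h0
        exact h (by rwa [← ZMod.val_eq_zero, ← hy])
    have huw : y = (x + (n - k)) % n := by
      rw [hy, show u - w = (u - v) + (v - w) by ring, ZMod.val_add, hvwval]
    have hy2 : y = x + (n - k) ∨ y + n = x + (n - k) := by
      rcases Nat.lt_or_ge (x + (n - k)) n with h | h
      · left; rw [huw, Nat.mod_eq_of_lt h]
      · right
        rw [huw, Nat.mod_eq_sub_mod h, Nat.mod_eq_of_lt (by omega)]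
        omega
    set d1 := min (v - u).val x with hd1
    set d2 := min (w - u).val y with hd2
    have hd1a : d1 = (v - u).val ∨ d1 = x := min_choice _ _
    have hd1b : d1 ≤ (v - u).val := min_le_left _ _
    have hd1c : d1 ≤ x := min_le_right _ _
    have hd2a : d2 = (w - u).val ∨ d2 = y := min_choice _ _
    have hd2b : d2 ≤ (w - u).val := min_le_left _ _
    have hd2c : d2 ≤ y := min_le_right _ _
    have habs := abs_lt.mp hu
    have hylt : y < n := ZMod.val_lt _
    simp only [hF, Finset.mem_filter, Finset.mem_range]
    exact ⟨hxlt, arith_key n k x y (v-u).val (w-u).val d1 d2 hn hk2 hkn hxlt hylt hvu hwu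
      hy2 hd1a hd1b hd1c hd2a hd2b hd2c habs.1 habs.2⟩
  have hinjf : Function.Injective (fun u : ZMod n => (u - v).val) := by
    intro a b h
    dsimp at h
    have h2 := ZMod.val_injective n h
    have : a - v = b - v := h2
    linear_combination this
  have hc4 : Sᶜ.ncard ≤ 4 := by
    calc Sᶜ.ncard = ((fun u : ZMod n => (u - v).val) '' Sᶜ).ncard :=
          (Set.ncard_image_of_injective _ hinjf).symm
      _ ≤ (↑F : Set ℕ).ncard := by
          refine Set.ncard_le_ncard ?_ F.finite_toSet
          rintro - ⟨u, hu, rfl⟩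
          exact key u hu
      _ = F.card := Set.ncard_coe_finset F
      _ ≤ 4 := F_card_le n k hk2 hkn
  have htot := Set.ncard_add_ncard_compl S
  rw [Nat.card_zmod] at htot
  push_cast
  omega
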